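/- Let M = (V, I) be a matroid and S ∈ I. Suppose X ⊆ S and Y, Z ⊆ V \ S with Y ∩ Z = ∅ satisfy: (a) S + Z ∈ I, (b) S − X + Y ∈ I, and (c) rank(S + Y) = rank(S) = |S| (i.e., Y lies in the span of S). Then S + Z − X + Y ∈ I. -/

import Mathlib

open Classical

noncomputable section

structure FinMatroid (α : Type*) where
  Indep : Finset α → Prop
  empty_indep : Indep ∅
  subset_indep : ∀ ⦃A B : Finset α⦄, Indep A → B ⊆ A → Indep B
  exchange : ∀ ⦃A B : Finset α⦄, Indep A → Indep B → A.card < B.card →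
    ∃ b ∈ B \ A, Indep (insert b A)

variable {α : Type*} [DecidableEq α]

/-- The rank of a set `T`: the maximum cardinality of an independent subset of `T`. -/
def FinMatroid.rank (M : FinMatroid α) (T : Finset α) : ℕ :=
  (T.powerset.filter fun A => M.Indep A).sup Finset.card

lemma FinMatroid.card_le_rank (M : FinMatroid α) {D T : Finset α}
    (hD : M.Indep D) (hDT : D ⊆ T) : D.card ≤ M.rank T :=
  Finset.le_sup (by simp [Finset.mem_filter, Finset.mem_powerset, hDT, hD])

lemma FinMatroid.extend (M : FinMatroid α) :
    ∀ n (A C : Finset α), M.Indep A → M.Indep C → C.card - A.card ≤ n →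
    ∃ B, A ⊆ B ∧ B ⊆ A ∪ C ∧ M.Indep B ∧ C.card ≤ B.card := by
  intro n
  induction n with
  | zero =>
    intro A C hA hC h
    exact ⟨A, subset_rfl, Finset.subset_union_left, hA, Nat.le_of_sub_eq_zero (Nat.le_zero.1 h)⟩
  | succ n ih =>
    intro A C hA hC h
    by_cases hlt : A.card < C.card
    · obtain ⟨b, hb, hbi⟩ := M.exchange hA hC hlt
      have hdec : (fun a b : α => propDecidable (a = b)) = ‹DecidableEq α› := Subsingleton.elim _ _
      have hb : b ∈ C \ A := by convert hb
      have hbi : M.Indep (insert b A) := by convert hbi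
      have hbi' := hbi
      have hbC : b ∈ C := (Finset.mem_sdiff.1 hb).1
      have hbA : b ∉ A := (Finset.mem_sdiff.1 hb).2
      have hcard : (insert b A).card = A.card + 1 := Finset.card_insert_of_notMem hbA
      obtain ⟨B, h1, h2, h3, h4⟩ := ih (insert b A) C hbi' hC (by omega)
      refine ⟨B, (Finset.subset_insert _ _).trans h1, ?_, h3, h4⟩
      intro x hx
      have := h2 hx
      simp only [Finset.mem_union, Finset.mem_insert] at this ⊢
      rcases this with (h | h) | h
      · exact Or.inr (h ▸ hbC)
      · exact Or.inl h
      · exact Or.inr h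
    · exact ⟨A, subset_rfl, Finset.subset_union_left, hA, by omega⟩

/-- Fact 2: if `S + Z ∈ I`, `S − X + Y ∈ I` and `Y` lies in the span of `S`
(`rank (S + Y) = rank S = |S|`), with `X ⊆ S` and `Y, Z` disjoint subsets of the complement
of `S`, then `S + Z − X + Y ∈ I`. -/
theorem fact2 (M : FinMatroid α) (S X Y Z : Finset α)
    (hS : M.Indep S) (hX : X ⊆ S)
    (hYS : Disjoint Y S) (hZS : Disjoint Z S) (hYZ : Disjoint Y Z)
    (ha : M.Indep (S ∪ Z))
    (hb : M.Indep ((S \ X) ∪ Y))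
    (hc : M.rank (S ∪ Y) = M.rank S ∧ M.rank S = S.card) :
    M.Indep (((S ∪ Z) \ X) ∪ Y) := by
  obtain ⟨B, hAB, hBT, hBI, hBc⟩ :=
    M.extend ((S ∪ Z).card) ((S \ X) ∪ Y) (S ∪ Z) hb ha (Nat.sub_le _ _)
  -- B \ Z is an independent subset of S ∪ Y
  have hBZsub : B \ Z ⊆ S ∪ Y := by
    intro x hx
    rcases Finset.mem_sdiff.1 hx with ⟨hxB, hxZ⟩
    have := hBT hxB
    simp only [Finset.mem_union, Finset.mem_sdiff] at this ⊢
    rcases this with (⟨h, _⟩ | h) | (h | h)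
    · exact Or.inl h
    · exact Or.inr h
    · exact Or.inl h
    · exact absurd h hxZ
  have hrk : (B \ Z).card ≤ S.card := by
    have h := M.card_le_rank (M.subset_indep hBI (Finset.sdiff_subset)) hBZsub
    rwa [hc.1, hc.2] at h
  have hZB : Z ⊆ B := by
    have hcu : (S ∪ Z).card = S.card + Z.card :=
      Finset.card_union_of_disjoint hZS.symm
    have h1 : (B ∩ Z).card + (B \ Z).card = B.card := Finset.card_inter_add_card_sdiff B Z
    have h2 : Z.card ≤ (B ∩ Z).card := by omega
    have : B ∩ Z = Z :=
      Finset.eq_of_subset_of_card_le Finset.inter_subset_right h2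
    exact this ▸ Finset.inter_subset_left
  refine M.subset_indep hBI ?_
  intro x hx
  simp only [Finset.mem_union, Finset.mem_sdiff] at hx
  rcases hx with ⟨h | h, hxX⟩ | h
  · exact hAB (by simp [Finset.mem_union, Finset.mem_sdiff, h, hxX])
  · exact hZB h
  · exact hAB (by simp [h])
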